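/- Assume additionally μ ≠ 0. Let v, δ ∈ ℕ₀ with δ ≤ v, let m, n ∈ ℕ with n ≥ m, and let x, z ∈ ℂ. Then the m-th partial derivative with respect to x of _Tℬ^{(c,v)}_{n,μ}(x,z;λ) equals m! · (−μ)^{−δ} · Σ_{r=0}^{n−m} binomial(n,r) · binomial(n−r,m) · ℬ^{(δ)}_{r}(−λ/μ) · _Tℬ^{(c,v−δ)}_{n−r−m,μ}(x,z;λ). (Note that λ + μ ≠ 0 guarantees −λ/μ ≠ 1.) -/

import Mathlib

/-!
Parametric kinds of generalized Apostol–Bernoulli polynomials (Özat–Çekim–Kızılateş–Qi).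
All generating functions are formal power series in `t` over `ℂ`; each polynomial family is
`n!` times the `n`-th coefficient of its generating series.
-/

open PowerSeries

noncomputable section

/-- The formal power series `t / (λ eᵗ + μ)`. -/
def bker (lam mu : ℂ) : ℂ⟦X⟧ := X * (C (R := ℂ) lam * exp ℂ + C (R := ℂ) mu)⁻¹

/-- The formal power series `e^{x t}`. -/
def expS (x : ℂ) : ℂ⟦X⟧ := rescale x (exp ℂ)

/-- The formal power series `cos (z t)`. -/
def cosS (z : ℂ) : ℂ⟦X⟧ := rescale z (cos ℂ)

/-- The formal power series `sin (z t)`. -/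
def sinS (z : ℂ) : ℂ⟦X⟧ := rescale z (sin ℂ)

/-- Parametric (cosine) kind of generalized Apostol–Bernoulli polynomials
`_Tℬ^{(c,v)}_{n,μ}(x,z;λ)`, defined by
`(t/(λeᵗ+μ))^v e^{xt} U(t) cos(zt) = Σ_n _Tℬ^{(c,v)}_{n,μ}(x,z;λ) tⁿ/n!`. -/
def TBc (lam mu : ℂ) (U : ℂ⟦X⟧) (v n : ℕ) (x z : ℂ) : ℂ :=
  n.factorial * coeff (R := ℂ) n (bker lam mu ^ v * expS x * U * cosS z)

/-- Parametric (sine) kind of generalized Apostol–Bernoulli polynomials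
`_Tℬ^{(s,v)}_{n,μ}(x,z;λ)`, defined by
`(t/(λeᵗ+μ))^v e^{xt} U(t) sin(zt) = Σ_n _Tℬ^{(s,v)}_{n,μ}(x,z;λ) tⁿ/n!`. -/
def TBs (lam mu : ℂ) (U : ℂ⟦X⟧) (v n : ℕ) (x z : ℂ) : ℂ :=
  n.factorial * coeff (R := ℂ) n (bker lam mu ^ v * expS x * U * sinS z)

/-- `_Tℬ^{(v)}_{n,μ}(x;λ)`, defined by
`(t/(λeᵗ+μ))^v e^{xt} U(t) = Σ_n _Tℬ^{(v)}_{n,μ}(x;λ) tⁿ/n!`. -/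
def TB (lam mu : ℂ) (U : ℂ⟦X⟧) (v n : ℕ) (x : ℂ) : ℂ :=
  n.factorial * coeff (R := ℂ) n (bker lam mu ^ v * expS x * U)

/-- Cosine generalized Apostol–Bernoulli polynomials `ℬ^{(c,v)}_{n,μ}(x,z;λ)`, defined by
`(t/(λeᵗ+μ))^v e^{xt} cos(zt) = Σ_n ℬ^{(c,v)}_{n,μ}(x,z;λ) tⁿ/n!`. -/
def Bc (lam mu : ℂ) (v n : ℕ) (x z : ℂ) : ℂ :=
  n.factorial * coeff (R := ℂ) n (bker lam mu ^ v * expS x * cosS z)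

/-- Sine generalized Apostol–Bernoulli polynomials `ℬ^{(s,v)}_{n,μ}(x,z;λ)`. -/
def Bs (lam mu : ℂ) (v n : ℕ) (x z : ℂ) : ℂ :=
  n.factorial * coeff (R := ℂ) n (bker lam mu ^ v * expS x * sinS z)

/-- Generalized Apostol–Bernoulli polynomials of order `v`: `ℬ^{(v)}_{n,μ}(x;λ)`, defined by
`(t/(λeᵗ+μ))^v e^{xt} = Σ_n ℬ^{(v)}_{n,μ}(x;λ) tⁿ/n!`. -/
def Bpoly (lam mu : ℂ) (v n : ℕ) (x : ℂ) : ℂ :=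
  n.factorial * coeff (R := ℂ) n (bker lam mu ^ v * expS x)

/-- Generalized Apostol–Bernoulli numbers `ℬ^{(v)}_{n,μ}(λ) := ℬ^{(v)}_{n,μ}(0;λ)`. -/
def Bnum (lam mu : ℂ) (v n : ℕ) : ℂ := Bpoly lam mu v n 0

/-- The 2-variable general polynomials `T_n(x)`, defined by `e^{xt} U(t) = Σ_n T_n(x) tⁿ/n!`. -/
def Tpoly (U : ℂ⟦X⟧) (n : ℕ) (x : ℂ) : ℂ := n.factorial * coeff (R := ℂ) n (expS x * U)

/-- `U_n := n!` times the `n`-th coefficient of `U`. -/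
def Unum (U : ℂ⟦X⟧) (n : ℕ) : ℂ := n.factorial * coeff (R := ℂ) n U

/-- `C_n(x,y)`, defined by `e^{xt} cos(yt) = Σ_n C_n(x,y) tⁿ/n!`. -/
def Cpoly (n : ℕ) (x y : ℂ) : ℂ := n.factorial * coeff (R := ℂ) n (expS x * cosS y)

/-- `S_n(x,y)`, defined by `e^{xt} sin(yt) = Σ_n S_n(x,y) tⁿ/n!`. -/
def Spoly (n : ℕ) (x y : ℂ) : ℂ := n.factorial * coeff (R := ℂ) n (expS x * sinS y)

/-- Apostol–Bernoulli numbers of order `δ`: `ℬ^{(δ)}_n(Λ)`, defined by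
`(t/(Λeᵗ−1))^δ = Σ_n ℬ^{(δ)}_n(Λ) tⁿ/n!`. -/
def ABnum (L : ℂ) (d n : ℕ) : ℂ :=
  n.factorial * coeff (R := ℂ) n ((X * (C (R := ℂ) L * exp ℂ - 1)⁻¹) ^ d)

/-- Generalized Apostol–Genocchi polynomials `𝒢^{(v)}_{n,μ}(x;λ)`, defined by
`(2t/(λeᵗ+μ))^v e^{xt} = Σ_n 𝒢^{(v)}_{n,μ}(x;λ) tⁿ/n!`. -/
def Gpoly (lam mu : ℂ) (v n : ℕ) (x : ℂ) : ℂ :=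
  n.factorial * coeff (R := ℂ) n ((C (R := ℂ) 2 * X * (C (R := ℂ) lam * exp ℂ + C (R := ℂ) mu)⁻¹) ^ v * expS x)

end


section Aux

open PowerSeries Finset

lemma expS_zero : expS 0 = 1 := by
  simp [expS, rescale_zero, constantCoeff_exp]

lemma TBc_repA (lam mu : ℂ) (U : ℂ⟦X⟧) (v n : ℕ) (z : ℂ) (x : ℂ) :
    TBc lam mu U v n x z
      = ∑ k ∈ Finset.range (n + 1),
          (n.choose k : ℂ) * TBc lam mu U v (n - k) 0 z * x ^ k := by
  unfold TBc
  have h1 : bker lam mu ^ v * expS x * U * cosS z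
      = expS x * (bker lam mu ^ v * U * cosS z) := by ring
  rw [h1, coeff_mul, Finset.Nat.sum_antidiagonal_eq_sum_range_succ_mk, Finset.mul_sum]
  refine Finset.sum_congr rfl fun k hk => ?_
  have hk' : k ≤ n := Nat.lt_succ_iff.mp (Finset.mem_range.mp hk)
  have h2 : bker lam mu ^ v * expS 0 * U * cosS z = bker lam mu ^ v * U * cosS z := by
    rw [expS_zero]; ring
  rw [h2]
  have h3 : coeff (R := ℂ) k (expS x) = x ^ k * (1 / k.factorial : ℂ) := by
    simp [expS, coeff_rescale, coeff_exp]
  rw [h3]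
  have h4 : (n.factorial : ℂ) = (n.choose k : ℂ) * k.factorial * (n - k).factorial := by
    exact_mod_cast (Nat.choose_mul_factorial_mul_factorial hk').symm
  rw [h4]
  have : (k.factorial : ℂ) ≠ 0 := Nat.cast_ne_zero.mpr k.factorial_ne_zero
  field_simp

lemma TBc_derivB (lam mu : ℂ) (U : ℂ⟦X⟧) (v : ℕ) (z : ℂ) (c : ℂ) (n : ℕ) :
    deriv (fun x : ℂ => c * TBc lam mu U v (n + 1) x z)
      = fun x : ℂ => (c * (n + 1)) * TBc lam mu U v n x z := by
  funext x
  have hfun : (fun x : ℂ => c * TBc lam mu U v (n + 1) x z)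
      = fun x : ℂ => ∑ k ∈ Finset.range (n + 2),
          (c * ((n + 1).choose k : ℂ) * TBc lam mu U v (n + 1 - k) 0 z) * x ^ k := by
    funext y
    rw [TBc_repA, Finset.mul_sum]
    exact Finset.sum_congr rfl fun k _ => by ring
  rw [hfun]
  have hd : HasDerivAt
      (fun x : ℂ => ∑ k ∈ Finset.range (n + 2),
          (c * ((n + 1).choose k : ℂ) * TBc lam mu U v (n + 1 - k) 0 z) * x ^ k)
      (∑ k ∈ Finset.range (n + 2),
          (c * ((n + 1).choose k : ℂ) * TBc lam mu U v (n + 1 - k) 0 z)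
            * (k * x ^ (k - 1))) x := by
    refine HasDerivAt.fun_sum fun k _ => ?_
    exact (hasDerivAt_pow k x).const_mul _
  rw [hd.deriv, Finset.sum_range_succ']
  simp only [Nat.cast_zero, zero_mul, mul_zero, add_zero]
  rw [TBc_repA lam mu U v n z x, Finset.mul_sum]
  refine Finset.sum_congr rfl fun j hj => ?_
  have h5 : ((n + 1).choose (j + 1) : ℂ) * (j + 1) = (n + 1) * (n.choose j : ℂ) := by
    exact_mod_cast (Nat.add_one_mul_choose_eq n j).symm
  have h6 : n + 1 - (j + 1) = n - j := by omega
  rw [h6]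
  simp only [Nat.add_sub_cancel, Nat.cast_add, Nat.cast_one]
  calc (c * ((n + 1).choose (j + 1) : ℂ) * TBc lam mu U v (n - j) 0 z) * ((j + 1) * x ^ j)
      = c * (((n + 1).choose (j + 1) : ℂ) * ((j : ℂ) + 1))
          * TBc lam mu U v (n - j) 0 z * x ^ j := by ring
    _ = c * ((n : ℂ) + 1) * ((n.choose j : ℂ) * TBc lam mu U v (n - j) 0 z * x ^ j) := by
        rw [h5]; ring

lemma TBc_iterB (lam mu : ℂ) (U : ℂ⟦X⟧) (v : ℕ) (z : ℂ) (m : ℕ) :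
    ∀ n c (x : ℂ), m ≤ n →
      iteratedDeriv m (fun x : ℂ => c * TBc lam mu U v n x z) x
        = c * (n.descFactorial m : ℂ) * TBc lam mu U v (n - m) x z := by
  induction m with
  | zero => intro n c x _; simp
  | succ m ih =>
    intro n c x hmn
    obtain ⟨n, rfl⟩ : ∃ n', n = n' + 1 := ⟨n - 1, by omega⟩
    rw [iteratedDeriv_succ', TBc_derivB]
    rw [ih n (c * (n + 1)) x (by omega)]
    rw [Nat.succ_descFactorial_succ]
    have h7 : n + 1 - (m + 1) = n - m := by omega
    rw [h7]
    push_cast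
    ring

lemma bker_factor (lam mu : ℂ) (hlm : lam + mu ≠ 0) (hmu : mu ≠ 0) :
    bker lam mu = C (R := ℂ) (-mu)⁻¹ * (X * (C (R := ℂ) (-lam / mu) * exp ℂ - 1)⁻¹) := by
  have key : C (R := ℂ) (-lam / mu) * exp ℂ - 1 = C (R := ℂ) (-mu)⁻¹ * (C (R := ℂ) lam * exp ℂ + C (R := ℂ) mu) := by
    have h1 : (-mu)⁻¹ * lam = -lam / mu := by
      rw [← neg_inv, neg_mul, inv_mul_eq_div, neg_div]
    have h2 : (-mu)⁻¹ * mu = -1 := by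
      rw [← neg_inv, neg_mul, inv_mul_cancel₀ hmu]
    rw [mul_add, ← mul_assoc, ← map_mul, ← map_mul, h1, h2]
    simp only [map_neg, map_one]
    ring
  have hinv : (C (R := ℂ) (-lam / mu) * exp ℂ - 1)⁻¹
      = (C (R := ℂ) lam * exp ℂ + C (R := ℂ) mu)⁻¹ * C (R := ℂ) (-mu) := by
    rw [key, PowerSeries.mul_inv_rev, C_inv, inv_inv]
  have hc : C (R := ℂ) (-mu)⁻¹ * C (R := ℂ) (-mu) = 1 := by
    rw [← map_mul, inv_mul_cancel₀ (neg_ne_zero.mpr hmu), map_one]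
  rw [bker, hinv]
  calc X * (C (R := ℂ) lam * exp ℂ + C (R := ℂ) mu)⁻¹
      = X * (C (R := ℂ) lam * exp ℂ + C (R := ℂ) mu)⁻¹ * (C (R := ℂ) (-mu)⁻¹ * C (R := ℂ) (-mu)) := by
        rw [hc, mul_one]
    _ = C (R := ℂ) (-mu)⁻¹ * (X * ((C (R := ℂ) lam * exp ℂ + C (R := ℂ) mu)⁻¹ * C (R := ℂ) (-mu))) := by ring

lemma natkey (n m r : ℕ) (hmn : m ≤ n) (hr : r ≤ n - m) :
    n.descFactorial m * (n - m).factorial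
      = m.factorial * n.choose r * ((n - r).choose m) * r.factorial
          * (n - m - r).factorial := by
  have hrn : r ≤ n := by omega
  have hmr : m ≤ n - r := by omega
  have hidx : n - m - r = n - r - m := by omega
  rw [hidx]
  apply Nat.eq_of_mul_eq_mul_left (Nat.factorial_pos m)
  rw [Nat.descFactorial_eq_factorial_mul_choose]
  calc m.factorial * (m.factorial * n.choose m * (n - m).factorial)
      = m.factorial * (n.choose m * m.factorial * (n - m).factorial) := by ring
    _ = m.factorial * n.factorial := by rw [Nat.choose_mul_factorial_mul_factorial hmn]
    _ = m.factorial * (n.choose r * r.factorial * (n - r).factorial) := by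
        rw [Nat.choose_mul_factorial_mul_factorial hrn]
    _ = m.factorial * (n.choose r * r.factorial
          * ((n - r).choose m * m.factorial * (n - r - m).factorial)) := by
        rw [Nat.choose_mul_factorial_mul_factorial hmr]
    _ = m.factorial * (m.factorial * n.choose r * (n - r).choose m * r.factorial
          * (n - r - m).factorial) := by ring

end Aux

theorem stmt16 (lam mu : ℂ) (hlm : lam + mu ≠ 0) (U : ℂ⟦X⟧) (hU : PowerSeries.coeff (R := ℂ) 0 U ≠ 0)
    (hmu : mu ≠ 0) (v δ : ℕ) (hδ : δ ≤ v) (m n : ℕ) (hm : 1 ≤ m) (hmn : m ≤ n) (x z : ℂ) :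
    iteratedDeriv m (fun x : ℂ => TBc lam mu U v n x z) x
      = (m.factorial : ℂ) * (-mu) ^ (-(δ : ℤ)) *
          ∑ r ∈ Finset.range (n - m + 1),
            (n.choose r : ℂ) * ((n - r).choose m : ℂ) * ABnum (-lam / mu) δ r *
              TBc lam mu U (v - δ) (n - r - m) x z := by
  have hz : ((-mu : ℂ)) ^ (-(δ : ℤ)) = ((-mu)⁻¹) ^ δ := by
    rw [zpow_neg, zpow_natCast, inv_pow]
  have hLHS : iteratedDeriv m (fun x : ℂ => TBc lam mu U v n x z) x
      = (n.descFactorial m : ℂ) * TBc lam mu U v (n - m) x z := by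
    have h := TBc_iterB lam mu U v z m n 1 x hmn
    simp only [one_mul] at h
    exact h
  rw [hLHS, hz]
  set A : ℂ⟦X⟧ := X * (C (R := ℂ) (-lam / mu) * exp ℂ - 1)⁻¹ with hA
  have hb := bker_factor lam mu hlm hmu
  have hbv : bker lam mu ^ v
      = C (R := ℂ) (((-mu)⁻¹) ^ δ) * (A ^ δ * bker lam mu ^ (v - δ)) := by
    calc bker lam mu ^ v = bker lam mu ^ δ * bker lam mu ^ (v - δ) := by
          rw [← pow_add]; congr 1; omega
      _ = (C (R := ℂ) (-mu)⁻¹ * A) ^ δ * bker lam mu ^ (v - δ) := by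
          nth_rewrite 1 [hb]; rfl
      _ = C (R := ℂ) (((-mu)⁻¹) ^ δ) * (A ^ δ * bker lam mu ^ (v - δ)) := by
          rw [mul_pow, map_pow]; ring
  have hco : coeff (R := ℂ) (n - m) (bker lam mu ^ v * expS x * U * cosS z)
      = ((-mu)⁻¹) ^ δ * ∑ r ∈ Finset.range (n - m + 1),
          coeff (R := ℂ) r (A ^ δ)
            * coeff (R := ℂ) (n - m - r) (bker lam mu ^ (v - δ) * expS x * U * cosS z) := by
    rw [hbv]
    have h9 : C (R := ℂ) (((-mu)⁻¹) ^ δ) * (A ^ δ * bker lam mu ^ (v - δ)) * expS x * U * cosS z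
        = C (R := ℂ) (((-mu)⁻¹) ^ δ)
            * (A ^ δ * (bker lam mu ^ (v - δ) * expS x * U * cosS z)) := by ring
    rw [h9, coeff_C_mul, coeff_mul, Finset.Nat.sum_antidiagonal_eq_sum_range_succ_mk]
  simp only [TBc, ABnum, ← hA]
  rw [hco, Finset.mul_sum, Finset.mul_sum, Finset.mul_sum, Finset.mul_sum]
  refine Finset.sum_congr rfl fun r hr => ?_
  have hr' : r ≤ n - m := Nat.lt_succ_iff.mp (Finset.mem_range.mp hr)
  have hidx : n - r - m = n - m - r := by omega
  rw [hidx]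
  have hnat := natkey n m r hmn hr'
  have hcast : (n.descFactorial m : ℂ) * (n - m).factorial
      = (m.factorial : ℂ) * n.choose r * ((n - r).choose m) * r.factorial
          * (n - m - r).factorial := by exact_mod_cast hnat
  set a := coeff (R := ℂ) r (A ^ δ)
  set b := coeff (R := ℂ) (n - m - r) (bker lam mu ^ (v - δ) * expS x * U * cosS z)
  calc (n.descFactorial m : ℂ)
        * ((n - m).factorial * (((-mu)⁻¹) ^ δ * (a * b)))
      = ((n.descFactorial m : ℂ) * (n - m).factorial) * (((-mu)⁻¹) ^ δ * a * b) := by ring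
    _ = ((m.factorial : ℂ) * n.choose r * ((n - r).choose m) * r.factorial
          * (n - m - r).factorial) * (((-mu)⁻¹) ^ δ * a * b) := by rw [hcast]
    _ = (m.factorial : ℂ) * (-mu)⁻¹ ^ δ
          * ((n.choose r : ℂ) * ((n - r).choose m : ℂ) * (r.factorial * a)
            * ((n - m - r).factorial * b)) := by ring
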